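/- (Lemma 6.5: exact first-order Euler–Maclaurin formula comparing continuum and lattice integrals) Let d ≥ 1, ε > 0, and let f : ℝ^d → ℝ be continuously differentiable with compact support. For 1 ≤ j ≤ d define M_j f := Σ_{(z_j,…,z_d) ∈ (εℤ)^{d−j+1}} ε^{d−j+1} ∫_{ℝ^{j−1}} dz_1⋯dz_{j−1} (∇̃_j f)(z), where z = (z_1,…,z_d) and (∇̃_j f)(z) := ∫₀¹ (1−t) (∂_j f)(z + t ε ê_j) dt. Then ∫_{ℝ^d} f(z) dz − ε^d Σ_{z ∈ (εℤ)^d} f(z) = ε Σ_{j=1}^{d} M_j f. -/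

import Mathlib

open scoped ENNReal BigOperators

open MeasureTheory

namespace FRD

abbrev Pt (d : ℕ) := Fin d → ℝ

variable {d : ℕ}

abbrev Idx (d : ℕ) := Fin d → ℤ

/-- The lattice point of `(εℤ)^d` with integer coordinates `k`. -/
noncomputable def toPt (ε : ℝ) (k : Idx d) : Pt d := fun i => ε * (k i : ℝ)

/-- Continuum directional derivative in coordinate direction `e`. -/
noncomputable def cderiv (e : Fin d) (f : Pt d → ℝ) (x : Pt d) : ℝ :=
  fderiv ℝ f x (Pi.single e 1 : Pt d)

/-- A point of `ℝ^d` whose coordinates `i < j` are the continuum variables `u` and whose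
coordinates `i ≥ j` are the lattice variables `ε • K`. -/
noncomputable def mixedPt (ε : ℝ) (j : Fin d) (u : {i : Fin d // (i : ℕ) < (j : ℕ)} → ℝ)
    (K : {i : Fin d // (j : ℕ) ≤ (i : ℕ)} → ℤ) : Pt d :=
  fun i => if h : (i : ℕ) < (j : ℕ) then u ⟨i, h⟩ else ε * (K ⟨i, Nat.le_of_not_lt h⟩ : ℝ)

/-! ### Auxiliary definitions -/

abbrev Lo (d j : ℕ) := {i : Fin d // (i : ℕ) < j}
abbrev Hi (d j : ℕ) := {i : Fin d // j ≤ (i : ℕ)}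

noncomputable def mp (ε : ℝ) (j : ℕ) (u : Lo d j → ℝ) (K : Hi d j → ℤ) : Pt d :=
  fun i => if h : (i : ℕ) < j then u ⟨i, h⟩ else ε * (K ⟨i, Nat.le_of_not_lt h⟩ : ℝ)

noncomputable def A (ε : ℝ) (f : Pt d → ℝ) (j : ℕ) : ℝ :=
  ∑' K : Hi d j → ℤ, ε ^ (d - j) * ∫ u : Lo d j → ℝ, f (mp ε j u K)

/-- the summand of the RHS -/
noncomputable def T (ε : ℝ) (f : Pt d → ℝ) (j : Fin d) (K : Hi d (j : ℕ) → ℤ) : ℝ :=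
  ε ^ (d - (j : ℕ)) *
    ∫ u : Lo d (j : ℕ) → ℝ,
      ∫ t in (0:ℝ)..1, (1 - t) *
        cderiv j f (mp ε (j : ℕ) u K + (t * ε) • (Pi.single j 1 : Pt d))

/-- support bound -/
lemma exists_bound (f : Pt d → ℝ) (hsupp : HasCompactSupport f) :
    ∃ R : ℝ, 0 < R ∧ ∀ z : Pt d, z ∈ tsupport f → ∀ i, |z i| ≤ R := by
  obtain ⟨R, hR⟩ := hsupp.isBounded.subset_closedBall 0
  refine ⟨max R 1, by positivity, fun z hz i => ?_⟩
  have := hR hz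
  simp only [Metric.mem_closedBall, dist_zero_right] at this
  calc |z i| = ‖z i‖ := rfl
    _ ≤ ‖z‖ := norm_le_pi_norm z i
    _ ≤ R := this
    _ ≤ max R 1 := le_max_left _ _


open intervalIntegral in
lemma oneD {g g' : ℝ → ℝ} (hg : ∀ x, HasDerivAt g (g' x) x) (hg' : Continuous g')
    {ε : ℝ} (hε : 0 < ε) (a : ℝ) :
    ∫ x in Set.Ico a (a + ε), g x
      = ε * g a + ε ^ 2 * ∫ t in (0:ℝ)..1, (1 - t) * g' (a + ε * t) := by
  have hcont : Continuous g := by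
    rw [continuous_iff_continuousAt]; exact fun x => (hg x).continuousAt
  have hinner : ∀ t : ℝ, HasDerivAt (fun s => a + ε * s) ε t := by
    intro t
    simpa using ((hasDerivAt_id t).const_mul ε).const_add a
  have hv : ∀ t : ℝ, HasDerivAt (fun s => g (a + ε * s)) (ε * g' (a + ε * t)) t := by
    intro t
    simpa [mul_comm, Function.comp_def] using (hg (a + ε * t)).comp t (hinner t)
  have hu : ∀ t : ℝ, HasDerivAt (fun s : ℝ => 1 - s) (-1) t := by
    intro t; simpa using (hasDerivAt_id t).const_sub 1
  have parts : ∫ t in (0:ℝ)..1, (1 - t) * (ε * g' (a + ε * t))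
      = (1 - 1) * g (a + ε * 1) - (1 - 0) * g (a + ε * 0)
        - ∫ t in (0:ℝ)..1, (-1) * g (a + ε * t) := by
    exact integral_mul_deriv_eq_deriv_mul (fun x _ => hu x) (fun x _ => hv x)
      intervalIntegrable_const
      (Continuous.intervalIntegrable (by continuity) _ _)
  have hsub : ∫ x in a..(a + ε), g x = ε * ∫ t in (0:ℝ)..1, g (a + ε * t) := by
    rw [integral_comp_add_mul g (ne_of_gt hε) a]
    simp [smul_eq_mul]
    field_simp
  have hico : ∫ x in Set.Ico a (a + ε), g x = ∫ x in a..(a + ε), g x := by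
    rw [integral_of_le (by linarith)]
    rw [MeasureTheory.integral_Ico_eq_integral_Ioo, MeasureTheory.integral_Ioc_eq_integral_Ioo]
  have hpull : ∫ t in (0:ℝ)..1, (1 - t) * (ε * g' (a + ε * t))
      = ε * ∫ t in (0:ℝ)..1, (1 - t) * g' (a + ε * t) := by
    rw [← intervalIntegral.integral_const_mul]
    congr 1; ext t; ring
  have hneg : ∫ t in (0:ℝ)..1, (-1) * g (a + ε * t) = -∫ t in (0:ℝ)..1, g (a + ε * t) := by
    simp [neg_one_mul, intervalIntegral.integral_neg]
  rw [hpull, hneg] at parts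
  simp only [mul_zero, mul_one, sub_self, zero_mul, one_mul, sub_zero, add_zero] at parts
  rw [hico, hsub]
  linear_combination (-ε) * parts


lemma hcs_box {ι : Type*} [Fintype ι] {g : (ι → ℝ) → ℝ} {R : ℝ}
    (h : ∀ u, g u ≠ 0 → ∀ i, |u i| ≤ R) : HasCompactSupport g := by
  have hbox : IsCompact (Set.pi Set.univ (fun _ : ι => Set.Icc (-R) R)) :=
    isCompact_univ_pi (fun _ => isCompact_Icc)
  refine hbox.of_isClosed_subset (isClosed_tsupport g) (closure_minimal ?_ hbox.isClosed)
  intro u hu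
  exact fun i _ => Set.mem_Icc.mpr (abs_le.mp
    (h u (by simpa [Function.mem_support] using hu) i))


/-- mixed point with an explicit real coordinate at position `n`. -/
noncomputable def W (ε : ℝ) (n : ℕ) (u : Lo d n → ℝ) (x : ℝ) (K : Hi d (n+1) → ℤ) : Pt d :=
  fun i => if h : (i : ℕ) < n then u ⟨i, h⟩
    else if h2 : n + 1 ≤ (i : ℕ) then ε * (K ⟨i, h2⟩ : ℝ) else x

/-- splitting off the `n`-th integer coordinate -/
def eL (n : ℕ) (hn : n < d) : (Hi d n → ℤ) ≃ ((Hi d (n+1) → ℤ) × ℤ) where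
  toFun K := (fun i => K ⟨i.1, by omega⟩, K ⟨⟨n, hn⟩, le_refl n⟩)
  invFun p := fun i => if h : n + 1 ≤ (i.1 : ℕ) then p.1 ⟨i.1, h⟩ else p.2
  left_inv K := by
    funext i
    rcases i with ⟨iv, hi⟩
    by_cases h : n + 1 ≤ (iv : ℕ)
    · simp only [dif_pos h]
    · simp only [dif_neg h]
      congr 1
      ext
      simp only []
      omega
  right_inv p := by
    rcases p with ⟨K₁, k⟩
    refine Prod.ext ?_ ?_
    · funext i
      simp only [dif_pos i.2]
    · simp only [dif_neg (by omega : ¬ n + 1 ≤ n)]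

lemma eL_symm_val (n : ℕ) (hn : n < d) (K₁ : Hi d (n+1) → ℤ) (k : ℤ) (i : Hi d n)
    (h : n + 1 ≤ (i.1 : ℕ)) : (eL n hn).symm (K₁, k) i = K₁ ⟨i.1, h⟩ := dif_pos h

lemma eL_symm_at_n (n : ℕ) (hn : n < d) (K₁ : Hi d (n+1) → ℤ) (k : ℤ) :
    (eL n hn).symm (K₁, k) ⟨⟨n, hn⟩, le_refl n⟩ = k := dif_neg (by simp)

section psi
variable (n : ℕ) (hn : n < d)

abbrev pI (i : Lo d (n+1)) : Prop := ((i : Fin d) : ℕ) < n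

def eA : Lo d n ≃ {i : Lo d (n+1) // pI n i} where
  toFun i := ⟨⟨i.1, by omega⟩, i.2⟩
  invFun i := ⟨i.1.1, i.2⟩
  left_inv i := rfl
  right_inv i := rfl

def uqNP : Unique {i : Lo d (n+1) // ¬ pI n i} where
  default := ⟨⟨⟨n, hn⟩, Nat.lt_succ_self n⟩, by simp [pI]⟩
  uniq a := by
    apply Subtype.ext; apply Subtype.ext; apply Fin.ext
    have h1 : ¬ ((a.1 : Fin d) : ℕ) < n := a.2
    have h2 : ((a.1 : Fin d) : ℕ) < n + 1 := a.1.2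
    simp only []
    omega

noncomputable def ψ : ((Lo d n → ℝ) × ℝ) ≃ᵐ (Lo d (n+1) → ℝ) :=
  haveI := uqNP (d := d) n hn
  (MeasurableEquiv.prodCongr (MeasurableEquiv.piCongrLeft (fun _ => ℝ) (eA n))
      (MeasurableEquiv.funUnique {i : Lo d (n+1) // ¬ pI n i} ℝ).symm).trans
    (MeasurableEquiv.piEquivPiSubtypeProd (fun _ : Lo d (n+1) => ℝ) (pI n)).symm

lemma ψ_measurePreserving : MeasurePreserving (ψ (d := d) n hn) volume volume := by
  haveI := uqNP (d := d) n hn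
  have h2 : MeasurePreserving
      (MeasurableEquiv.piEquivPiSubtypeProd (fun _ : Lo d (n+1) => ℝ) (pI n)).symm
      (volume.prod volume) volume := by
    have := (volume_preserving_piEquivPiSubtypeProd (fun _ : Lo d (n+1) => ℝ) (pI n)).symm
    rwa [MeasureTheory.Measure.volume_eq_prod] at this
  rw [show (volume : Measure ((Lo d n → ℝ) × ℝ)) = volume.prod volume from
    MeasureTheory.Measure.volume_eq_prod _ _]
  refine MeasurePreserving.trans (MeasurePreserving.prod
    (volume_measurePreserving_piCongrLeft (fun _ => ℝ) (eA n)) ?_) h2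
  convert (volume_preserving_funUnique {i : Lo d (n+1) // ¬ pI n i} ℝ).symm using 3
  all_goals rfl

lemma ψ_apply (u : Lo d n → ℝ) (x : ℝ) (i : Lo d (n+1)) :
    ψ n hn (u, x) i = if h : ((i : Fin d) : ℕ) < n then u ⟨i.1, h⟩ else x := by
  haveI := uqNP (d := d) n hn
  show (MeasurableEquiv.piEquivPiSubtypeProd (fun _ : Lo d (n+1) => ℝ) (pI n)).symm
      ((MeasurableEquiv.piCongrLeft (fun _ => ℝ) (eA n)) u, fun _ => x) i = _
  rw [MeasurableEquiv.piEquivPiSubtypeProd]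
  simp only [MeasurableEquiv.symm_mk, MeasurableEquiv.coe_mk, Equiv.symm_symm]
  rw [Equiv.piEquivPiSubtypeProd_symm_apply]
  by_cases h : ((i : Fin d) : ℕ) < n
  · rw [dif_pos h, dif_pos h]
    have hi : i = (eA n ⟨i.1, h⟩ : {i : Lo d (n+1) // pI n i}).1 := by
      apply Subtype.ext; rfl
    show (MeasurableEquiv.piCongrLeft (fun _ => ℝ) (eA n)) u ⟨i, h⟩ = _
    have : (⟨i, h⟩ : {i : Lo d (n+1) // pI n i}) = eA n ⟨i.1, h⟩ := by
      apply Subtype.ext; apply Subtype.ext; rfl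
    rw [this]
    show (Equiv.piCongrLeft (fun _ => ℝ) (eA n)) u (eA n ⟨i.1, h⟩) = _
    rw [Equiv.piCongrLeft_apply_apply]
  · rw [dif_neg h, dif_neg h]

end psi

section ident
variable (ε : ℝ) (n : ℕ) (hn : n < d)

lemma mp_psi (u : Lo d n → ℝ) (x : ℝ) (K₁ : Hi d (n+1) → ℤ) :
    mp ε (n+1) (ψ n hn (u, x)) K₁ = W ε n u x K₁ := by
  funext i
  unfold mp W
  by_cases h1 : (i : ℕ) < n + 1
  · rw [dif_pos h1, ψ_apply]
    by_cases h2 : (i : ℕ) < n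
    · rw [dif_pos h2, dif_pos h2]
    · rw [dif_neg h2, dif_neg h2, dif_neg (by omega : ¬ n + 1 ≤ (i : ℕ))]
  · rw [dif_neg h1, dif_neg (by omega : ¬ (i : ℕ) < n), dif_pos (by omega : n + 1 ≤ (i : ℕ))]

lemma W_add_smul (u : Lo d n → ℝ) (a x : ℝ) (K₁ : Hi d (n+1) → ℤ) :
    W ε n u (a + x) K₁ = W ε n u a K₁ + x • (Pi.single (⟨n, hn⟩ : Fin d) 1 : Pt d) := by
  funext i
  unfold W
  simp only [Pi.add_apply, Pi.smul_apply, smul_eq_mul]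
  by_cases h1 : (i : ℕ) < n
  · rw [dif_pos h1, dif_pos h1, Pi.single_eq_of_ne (by intro h; subst h; simp at h1) 1]
    ring
  · rw [dif_neg h1, dif_neg h1]
    by_cases h2 : n + 1 ≤ (i : ℕ)
    · rw [dif_pos h2, dif_pos h2, Pi.single_eq_of_ne (by intro h; subst h; simp at h2) 1]
      ring
    · rw [dif_neg h2, dif_neg h2]
      have : i = (⟨n, hn⟩ : Fin d) := by
        apply Fin.ext
        simp only [Fin.val_mk]
        omega
      subst this
      rw [Pi.single_eq_same]
      ring

lemma mp_eq_W (u : Lo d n → ℝ) (K : Hi d n → ℤ) :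
    mp ε n u K = W ε n u (ε * (K ⟨⟨n, hn⟩, le_refl n⟩ : ℤ)) (fun i => K ⟨i.1, by omega⟩) := by
  funext i
  unfold mp W
  by_cases h1 : (i : ℕ) < n
  · rw [dif_pos h1, dif_pos h1]
  · rw [dif_neg h1, dif_neg h1]
    by_cases h2 : n + 1 ≤ (i : ℕ)
    · rw [dif_pos h2]
    · rw [dif_neg h2]
      have hi : i = (⟨n, hn⟩ : Fin d) := by
        apply Fin.ext
        simp only [Fin.val_mk]
        omega
      subst hi
      rfl

end ident

section calc'

lemma slice_hasDerivAt {f : Pt d → ℝ} (hf : ContDiff ℝ 1 f) (z v : Pt d) (x : ℝ) :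
    HasDerivAt (fun x : ℝ => f (z + x • v)) (fderiv ℝ f (z + x • v) v) x := by
  have hinner : HasDerivAt (fun x : ℝ => z + x • v) v x := by
    simpa using ((hasDerivAt_id x).smul_const v).const_add z
  have houter : HasFDerivAt f (fderiv ℝ f (z + x • v)) (z + x • v) :=
    (hf.differentiable one_ne_zero (z + x • v)).hasFDerivAt
  exact houter.comp_hasDerivAt x hinner

lemma cderiv_continuous {f : Pt d → ℝ} (hf : ContDiff ℝ 1 f) (e : Fin d) :
    Continuous (fun z => fderiv ℝ f z (Pi.single e 1 : Pt d)) :=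
  (hf.continuous_fderiv one_ne_zero).clm_apply continuous_const

end calc'

lemma iUnion_Ico_cells {ε : ℝ} (hε : 0 < ε) :
    (⋃ k : ℤ, Set.Ico (ε * k) (ε * k + ε)) = Set.univ := by
  ext x
  simp only [Set.mem_iUnion, Set.mem_Ico, Set.mem_univ, iff_true]
  refine ⟨⌊x / ε⌋, ?_, ?_⟩
  · have h := Int.floor_le (x / ε)
    have h2 : ε * ⌊x / ε⌋ ≤ ε * (x / ε) := by nlinarith
    have hx : ε * (x / ε) = x := by field_simp
    linarith
  · have h := Int.lt_floor_add_one (x / ε)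
    have h2 : ε * (x / ε) < ε * (⌊x / ε⌋ + 1) := by nlinarith
    have hx : ε * (x / ε) = x := by field_simp
    nlinarith

lemma pairwise_disjoint_cells {ε : ℝ} (hε : 0 < ε) :
    Pairwise (Function.onFun Disjoint (fun k : ℤ => Set.Ico (ε * k) (ε * k + ε))) := by
  intro k l hkl
  refine Set.Ico_disjoint_Ico.mpr ?_
  rcases lt_or_gt_of_ne hkl with h | h
  · have : (k : ℝ) + 1 ≤ l := by exact_mod_cast h
    calc min (ε * k + ε) (ε * l + ε) ≤ ε * k + ε := min_le_left _ _
      _ ≤ ε * l := by nlinarith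
      _ ≤ max (ε * k) (ε * l) := le_max_right _ _
  · have : (l : ℝ) + 1 ≤ k := by exact_mod_cast h
    calc min (ε * k + ε) (ε * l + ε) ≤ ε * l + ε := min_le_right _ _
      _ ≤ ε * k := by nlinarith
      _ ≤ max (ε * k) (ε * l) := le_max_left _ _


lemma hcs_real {g : ℝ → ℝ} {R : ℝ} (h : ∀ x, g x ≠ 0 → |x| ≤ R) : HasCompactSupport g := by
  refine isCompact_Icc.of_isClosed_subset (isClosed_tsupport g)
    (closure_minimal ?_ isClosed_Icc : tsupport g ⊆ Set.Icc (-R) R)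
  intro x hx
  exact Set.mem_Icc.mpr (abs_le.mp (h x (by simpa [Function.mem_support] using hx)))

lemma hcs_box_prod {ι : Type*} [Fintype ι] {g : ((ι → ℝ) × ℝ) → ℝ} {R : ℝ}
    (h : ∀ p, g p ≠ 0 → (∀ i, |p.1 i| ≤ R) ∧ |p.2| ≤ R) : HasCompactSupport g := by
  have hbox : IsCompact ((Set.pi Set.univ (fun _ : ι => Set.Icc (-R) R)) ×ˢ Set.Icc (-R) R) :=
    (isCompact_univ_pi (fun _ => isCompact_Icc)).prod isCompact_Icc
  refine hbox.of_isClosed_subset (isClosed_tsupport g) (closure_minimal ?_ hbox.isClosed)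
  rintro ⟨u, x⟩ hu
  obtain ⟨h1, h2⟩ := h (u, x) (by simpa [Function.mem_support] using hu)
  refine ⟨fun i _ => Set.mem_Icc.mpr (abs_le.mp (h1 i)), Set.mem_Icc.mpr (abs_le.mp h2)⟩

section core
variable {f : Pt d → ℝ} {R ε : ℝ} {n : ℕ}

lemma W_at_n (hn : n < d) (ε : ℝ) (u : Lo d n → ℝ) (x : ℝ) (K₁ : Hi d (n+1) → ℤ) :
    W ε n u x K₁ (⟨n, hn⟩ : Fin d) = x := by
  unfold W
  rw [dif_neg (by simp), dif_neg (by simp)]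

lemma W_lt (ε : ℝ) (u : Lo d n → ℝ) (x : ℝ) (K₁ : Hi d (n+1) → ℤ) (i : Lo d n) :
    W ε n u x K₁ i.1 = u i := by
  unfold W
  rw [dif_pos i.2]

lemma W_cont (ε : ℝ) (n : ℕ) (K₁ : Hi d (n+1) → ℤ) :
    Continuous (fun p : (Lo d n → ℝ) × ℝ => W ε n p.1 p.2 K₁) := by
  apply continuous_pi; intro i
  unfold W
  by_cases h : (i : ℕ) < n
  · simp only [dif_pos h]; exact (continuous_apply _).comp continuous_fst
  · simp only [dif_neg h]
    by_cases h2 : n + 1 ≤ (i : ℕ)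
    · simp only [dif_pos h2]; exact continuous_const
    · simp only [dif_neg h2]; exact continuous_snd

lemma key_K1 (hε : 0 < ε) (hf : Continuous f)
    (hR : ∀ z : Pt d, f z ≠ 0 → ∀ i, |z i| ≤ R) (hn : n < d)
    (N : ℕ) (hN : R ≤ ε * N) (K₁ : Hi d (n+1) → ℤ) :
    ∑' k : ℤ, ∫ u : Lo d n → ℝ, ∫ x in Set.Ico (ε*k) (ε*k+ε), f (W ε n u x K₁)
      = ∫ u' : Lo d (n+1) → ℝ, f (mp ε (n+1) u' K₁) := by
  set G := fun p : (Lo d n → ℝ) × ℝ => f (W ε n p.1 p.2 K₁) with hG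
  have hGc : Continuous G := hf.comp (W_cont ε n K₁)
  have hGcs : HasCompactSupport G := by
    refine hcs_box_prod (R := R) (fun p hp => ⟨fun i => ?_, ?_⟩)
    · have := hR _ hp i.1
      rwa [W_lt] at this
    · have := hR _ hp ⟨n, hn⟩
      rwa [W_at_n hn] at this
  have hGint : Integrable G volume := hGc.integrable_of_hasCompactSupport hGcs
  set s : Finset ℤ := Finset.Icc (-(N:ℤ)) N with hs
  have hvan : ∀ k : ℤ, k ∉ s → ∀ u x, x ∈ Set.Ico (ε*k) (ε*k+ε) → G (u,x) = 0 := by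
    intro k hk u x hx
    by_contra h0
    have hxR : |x| ≤ R := by
      have := hR _ h0 ⟨n, hn⟩
      rwa [W_at_n hn] at this
    rw [hs, Finset.mem_Icc, not_and_or, not_le, not_le] at hk
    have hx1 := hx.1
    have hx2 := hx.2
    have haR := abs_le.mp hxR
    rcases hk with hk | hk
    · have : (k:ℝ) + 1 ≤ -(N:ℝ) := by exact_mod_cast hk
      nlinarith [haR.1, haR.2]
    · have : (N:ℝ) + 1 ≤ (k:ℝ) := by exact_mod_cast hk
      nlinarith [haR.1, haR.2]
  have hslicecont : ∀ u, Continuous (fun x => G (u,x)) :=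
    fun u => hGc.comp (Continuous.prodMk_right u)
  have hsliceint : ∀ u, Integrable (fun x => G (u,x)) volume := by
    intro u
    refine (hslicecont u).integrable_of_hasCompactSupport (hcs_real (R := R) ?_)
    intro x hx
    have := hR _ hx ⟨n, hn⟩
    rwa [W_at_n hn] at this
  have hcells : ∀ u, ∫ x, G (u,x) = ∑' k : ℤ, ∫ x in Set.Ico (ε*k) (ε*k+ε), G (u,x) := by
    intro u
    have h := MeasureTheory.integral_iUnion (μ := volume)
      (fun k : ℤ => measurableSet_Ico) (pairwise_disjoint_cells hε)
      ((hsliceint u).integrableOn)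
    rw [iUnion_Ico_cells hε] at h
    simpa using h
  have hIint : ∀ k : ℤ, Integrable
      (fun u => ∫ x in Set.Ico (ε*k) (ε*k+ε), G (u,x)) volume := by
    intro k
    have h1 : Integrable G (volume.prod (volume.restrict (Set.Ico (ε*k) (ε*k+ε)))) := by
      have h2 : Integrable G ((volume.prod volume).restrict
          ((Set.univ : Set (Lo d n → ℝ)) ×ˢ Set.Ico (ε*k) (ε*k+ε))) := by
        rw [← MeasureTheory.Measure.volume_eq_prod]
        exact hGint.integrableOn
      rwa [← Measure.prod_restrict, Measure.restrict_univ] at h2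
    exact h1.integral_prod_left
  have hvanint : ∀ k : ℤ, k ∉ s →
      (∫ u : Lo d n → ℝ, ∫ x in Set.Ico (ε*k) (ε*k+ε), G (u,x)) = 0 := by
    intro k hk
    have : (fun u : Lo d n → ℝ => ∫ x in Set.Ico (ε*k) (ε*k+ε), G (u,x))
        = fun _ => 0 := funext fun u =>
      setIntegral_eq_zero_of_forall_eq_zero (fun x hx => hvan k hk u x hx)
    rw [this, integral_zero]
  calc ∑' k : ℤ, ∫ u : Lo d n → ℝ, ∫ x in Set.Ico (ε*k) (ε*k+ε), f (W ε n u x K₁)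
      = ∑ k ∈ s, ∫ u : Lo d n → ℝ, ∫ x in Set.Ico (ε*k) (ε*k+ε), G (u,x) :=
        tsum_eq_sum (fun k hk => hvanint k hk)
    _ = ∫ u : Lo d n → ℝ, ∑ k ∈ s, ∫ x in Set.Ico (ε*k) (ε*k+ε), G (u,x) :=
        (integral_finset_sum s (fun k _ => hIint k)).symm
    _ = ∫ u : Lo d n → ℝ, ∫ x, G (u,x) := by
        congr 1
        funext u
        exact (tsum_eq_sum (fun k hk => setIntegral_eq_zero_of_forall_eq_zero
          (fun x hx => hvan k hk u x hx))).symm.trans (hcells u).symm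
    _ = ∫ p : (Lo d n → ℝ) × ℝ, G p := by
        rw [MeasureTheory.Measure.volume_eq_prod]
        exact (integral_prod G (by rwa [← MeasureTheory.Measure.volume_eq_prod])).symm
    _ = ∫ u' : Lo d (n+1) → ℝ, f (mp ε (n+1) u' K₁) := by
        rw [← (ψ_measurePreserving n hn).integral_comp (ψ n hn).measurableEmbedding
          (fun u' => f (mp ε (n+1) u' K₁))]
        congr 1
        funext p
        rcases p with ⟨u, x⟩
        show G (u, x) = f (mp ε (n+1) (ψ n hn (u, x)) K₁)
        rw [mp_psi]

end core

section cell
variable {f : Pt d → ℝ} {R ε : ℝ} {n : ℕ}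

lemma mp_cont (ε : ℝ) (n : ℕ) (K : Hi d n → ℤ) :
    Continuous (fun u : Lo d n → ℝ => mp ε n u K) := by
  apply continuous_pi; intro i
  unfold mp
  by_cases h : (i : ℕ) < n
  · simp only [dif_pos h]; exact continuous_apply _
  · simp only [dif_neg h]; exact continuous_const

lemma mp_lt (ε : ℝ) (u : Lo d n → ℝ) (K : Hi d n → ℤ) (i : Lo d n) :
    mp ε n u K i.1 = u i := by
  unfold mp; rw [dif_pos i.2]

lemma mp_ge (ε : ℝ) (u : Lo d n → ℝ) (K : Hi d n → ℤ) (i : Hi d n) :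
    mp ε n u K i.1 = ε * (K i : ℝ) := by
  unfold mp
  rw [dif_neg (by omega : ¬ (i.1 : ℕ) < n)]

/-- The cell identity: integral over one cell equals `ε·(lattice term) + ε²·(derivative term)`. -/
lemma cell_identity (hε : 0 < ε) (hf : ContDiff ℝ 1 f) (hn : n < d)
    (hR : ∀ z : Pt d, z ∈ tsupport f → ∀ i, |z i| ≤ R)
    (K : Hi d n → ℤ) :
    (∫ u : Lo d n → ℝ, ∫ x in Set.Ico (ε * (K ⟨⟨n, hn⟩, le_refl n⟩ : ℤ))
        (ε * (K ⟨⟨n, hn⟩, le_refl n⟩ : ℤ) + ε), f (W ε n u x (fun i => K ⟨i.1, by omega⟩)))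
      = ε * (∫ u : Lo d n → ℝ, f (mp ε n u K))
        + ε ^ 2 * ∫ u : Lo d n → ℝ, ∫ t in (0:ℝ)..1, (1 - t) *
            fderiv ℝ f (mp ε n u K + (t * ε) • (Pi.single (⟨n, hn⟩ : Fin d) 1 : Pt d))
              (Pi.single (⟨n, hn⟩ : Fin d) 1) := by
  set a : ℝ := ε * (K ⟨⟨n, hn⟩, le_refl n⟩ : ℤ) with ha
  set K₁ : Hi d (n+1) → ℤ := fun i => K ⟨i.1, by omega⟩ with hK₁
  have haff : ∀ (u : Lo d n → ℝ) (x : ℝ),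
      W ε n u x K₁ = W ε n u 0 K₁ + x • (Pi.single (⟨n, hn⟩ : Fin d) 1 : Pt d) := by
    intro u x
    have := W_add_smul ε n hn u 0 x K₁
    rwa [zero_add] at this
  have hpoint : ∀ u : Lo d n → ℝ,
      (∫ x in Set.Ico a (a + ε), f (W ε n u x K₁))
        = ε * f (mp ε n u K) + ε ^ 2 * ∫ t in (0:ℝ)..1, (1 - t) *
            fderiv ℝ f (mp ε n u K + (t * ε) • (Pi.single (⟨n, hn⟩ : Fin d) 1 : Pt d))
              (Pi.single (⟨n, hn⟩ : Fin d) 1) := by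
    intro u
    have hmpW : mp ε n u K = W ε n u a K₁ := mp_eq_W ε n hn u K
    have hg : ∀ x, HasDerivAt (fun x => f (W ε n u x K₁))
        (fderiv ℝ f (W ε n u x K₁) (Pi.single (⟨n, hn⟩ : Fin d) 1 : Pt d)) x := by
      intro x
      have h1 : (fun x => f (W ε n u x K₁))
          = fun x => f (W ε n u 0 K₁ + x • (Pi.single (⟨n, hn⟩ : Fin d) 1 : Pt d)) := by
        funext y; rw [haff u y]
      rw [h1]
      have := slice_hasDerivAt hf (W ε n u 0 K₁) (Pi.single (⟨n, hn⟩ : Fin d) 1 : Pt d) x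
      rwa [← haff u x] at this
    have hg' : Continuous (fun x =>
        fderiv ℝ f (W ε n u x K₁) (Pi.single (⟨n, hn⟩ : Fin d) 1 : Pt d)) := by
      refine (cderiv_continuous hf ⟨n, hn⟩).comp ?_
      exact (W_cont ε n K₁).comp (Continuous.prodMk_right u)
    have h0 := oneD hg hg' hε a
    have hpt : ∀ t : ℝ, W ε n u (a + ε * t) K₁
        = mp ε n u K + (t * ε) • (Pi.single (⟨n, hn⟩ : Fin d) 1 : Pt d) := by
      intro t
      rw [W_add_smul ε n hn u a (ε * t) K₁, ← hmpW, mul_comm]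
    rw [h0, ← hmpW]
    congr 2
    apply intervalIntegral.integral_congr
    intro t _
    simp only []
    rw [hpt t]
  have h2 : (fun u : Lo d n → ℝ => ∫ x in Set.Ico a (a + ε), f (W ε n u x K₁))
      = fun u => ε * f (mp ε n u K) + ε ^ 2 * ∫ t in (0:ℝ)..1, (1 - t) *
          fderiv ℝ f (mp ε n u K + (t * ε) • (Pi.single (⟨n, hn⟩ : Fin d) 1 : Pt d))
            (Pi.single (⟨n, hn⟩ : Fin d) 1) := funext hpoint
  rw [h2]
  have hI1 : Integrable (fun u : Lo d n → ℝ => f (mp ε n u K)) volume := by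
    refine ((hf.continuous).comp (mp_cont ε n K)).integrable_of_hasCompactSupport ?_
    refine hcs_box (R := R) (fun u hu i => ?_)
    have hne : f (mp ε n u K) ≠ 0 := by simpa [Function.comp] using hu
    have := hR _ (subset_tsupport f (by simpa [Function.mem_support] using hne)) i.1
    rwa [mp_lt] at this
  have hI2 : Integrable (fun u : Lo d n → ℝ => ∫ t in (0:ℝ)..1, (1 - t) *
      fderiv ℝ f (mp ε n u K + (t * ε) • (Pi.single (⟨n, hn⟩ : Fin d) 1 : Pt d))
        (Pi.single (⟨n, hn⟩ : Fin d) 1)) volume := by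
    have hcont : Continuous (Function.uncurry (fun (u : Lo d n → ℝ) (t : ℝ) => (1 - t) *
        fderiv ℝ f (mp ε n u K + (t * ε) • (Pi.single (⟨n, hn⟩ : Fin d) 1 : Pt d))
          (Pi.single (⟨n, hn⟩ : Fin d) 1))) := by
      apply Continuous.mul
      · exact (continuous_const.sub continuous_snd)
      · refine (cderiv_continuous hf ⟨n, hn⟩).comp ?_
        refine Continuous.add ?_ ?_
        · exact (mp_cont ε n K).comp continuous_fst
        · exact ((continuous_snd.mul continuous_const).smul continuous_const)
    refine (intervalIntegral.continuous_parametric_intervalIntegral_of_continuous'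
      hcont 0 1).integrable_of_hasCompactSupport ?_
    refine hcs_box (R := R) (fun u hu i => ?_)
    have hex : ∃ t, (1 - t) *
        fderiv ℝ f (mp ε n u K + (t * ε) • (Pi.single (⟨n, hn⟩ : Fin d) 1 : Pt d))
          (Pi.single (⟨n, hn⟩ : Fin d) 1) ≠ 0 := by
      by_contra hc
      push_neg at hc
      apply hu
      have h3 : (fun t => (1 - t) *
          fderiv ℝ f (mp ε n u K + (t * ε) • (Pi.single (⟨n, hn⟩ : Fin d) 1 : Pt d))
            (Pi.single (⟨n, hn⟩ : Fin d) 1)) = fun _ => (0:ℝ) := funext hc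
      show (∫ t in (0:ℝ)..1, (1 - t) *
          fderiv ℝ f (mp ε n u K + (t * ε) • (Pi.single (⟨n, hn⟩ : Fin d) 1 : Pt d))
            (Pi.single (⟨n, hn⟩ : Fin d) 1)) = 0
      rw [h3]
      simp
    obtain ⟨t, ht⟩ := hex
    have hfd : fderiv ℝ f
        (mp ε n u K + (t * ε) • (Pi.single (⟨n, hn⟩ : Fin d) 1 : Pt d)) ≠ 0 := by
      intro h0
      apply ht
      rw [h0]
      simp
    have hmem : (mp ε n u K + (t * ε) • (Pi.single (⟨n, hn⟩ : Fin d) 1 : Pt d))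
        ∈ tsupport f :=
      support_fderiv_subset ℝ (by simpa [Function.mem_support] using hfd)
    have hb := hR _ hmem i.1
    have hvi : (Pi.single (⟨n, hn⟩ : Fin d) 1 : Pt d) i.1 = 0 := by
      refine Pi.single_eq_of_ne (fun h => ?_) 1
      have h2 := i.2
      rw [h] at h2
      simp at h2
    rw [Pi.add_apply, Pi.smul_apply, hvi, smul_eq_mul, mul_zero, add_zero, mp_lt] at hb
    exact hb
  rw [integral_add (hI1.const_mul ε) (hI2.const_mul (ε^2)), integral_const_mul, integral_const_mul]

end cell

/-- summability from a coordinate bound on the support -/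
lemma summable_box {σ : Type*} [Fintype σ] {g : (σ → ℤ) → ℝ} {M : ℕ}
    (h : ∀ K, g K ≠ 0 → ∀ i, |K i| ≤ (M:ℤ)) : Summable g := by
  refine summable_of_finite_support ?_
  refine Set.Finite.subset (Set.Finite.pi (fun _ : σ => Set.finite_Icc (-(M:ℤ)) M)) ?_
  intro K hK i _
  exact Set.mem_Icc.mpr (abs_le.mp (h K hK i))


lemma A_zero (ε : ℝ) (f : Pt d → ℝ) :
    A ε f 0 = ε ^ d * ∑' k : Idx d, f (toPt ε k) := by
  haveI hE : IsEmpty (Lo d 0) := ⟨fun i => Nat.not_lt_zero _ i.2⟩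
  have hint : ∀ K : Hi d 0 → ℤ,
      (∫ u : Lo d 0 → ℝ, f (mp ε 0 u K)) = f (toPt ε (fun i => K ⟨i, Nat.zero_le _⟩)) := by
    intro K
    rw [volume_pi, Measure.pi_of_empty, integral_dirac]
    congr 1
  unfold A
  simp_rw [hint, Nat.sub_zero]
  rw [tsum_mul_left]
  congr 1
  rw [← Equiv.tsum_eq
    (Equiv.arrowCongr (Equiv.subtypeUnivEquiv (fun i : Fin d => Nat.zero_le _)) (Equiv.refl ℤ))
    (fun k => f (toPt ε k))]
  apply tsum_congr
  intro K
  congr 1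

lemma A_top (ε : ℝ) (f : Pt d → ℝ) : A ε f d = ∫ z : Pt d, f z := by
  haveI hE : IsEmpty (Hi d d) := ⟨fun i => absurd i.1.2 (not_lt.mpr i.2)⟩
  set eT : Lo d d ≃ Fin d := Equiv.subtypeUnivEquiv (fun i => i.2) with heT
  have φmp := volume_measurePreserving_piCongrLeft (fun _ : Fin d => ℝ) eT
  have hint : ∀ K : Hi d d → ℤ,
      (∫ u : Lo d d → ℝ, f (mp ε d u K)) = ∫ z : Pt d, f z := by
    intro K
    rw [← φmp.integral_comp (MeasurableEquiv.piCongrLeft (fun _ => ℝ) eT).measurableEmbedding f]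
    congr 1; funext u
    congr 1; funext i
    have h1 : (MeasurableEquiv.piCongrLeft (fun _ : Fin d => ℝ) eT) u i
        = u (eT.symm i) := by
      show (Equiv.piCongrLeft (fun _ : Fin d => ℝ) eT) u i = u (eT.symm i)
      rw [Equiv.piCongrLeft_apply_eq_cast]
      exact cast_eq rfl _
    rw [h1]
    simp [mp, heT]
  unfold A
  simp_rw [hint, Nat.sub_self, pow_zero, one_mul]
  exact tsum_eq_single default (fun b hb => absurd (Subsingleton.elim b default) hb) |>.trans rfl

set_option maxHeartbeats 2000000 in
lemma A_step' (ε : ℝ) (hε : 0 < ε) (f : Pt d → ℝ) (hf : ContDiff ℝ 1 f)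
    (hsupp : HasCompactSupport f) (n : ℕ) (hn : n < d) :
    A ε f (n + 1) - A ε f n
      = ε * ∑' K : Hi d n → ℤ, T ε f ⟨n, hn⟩ K := by
  obtain ⟨R, hRpos, hR⟩ := exists_bound f hsupp
  have hR' : ∀ z : Pt d, f z ≠ 0 → ∀ i, |z i| ≤ R :=
    fun z hz i => hR z (subset_tsupport f (Function.mem_support.mpr hz)) i
  set N : ℕ := ⌈R / ε⌉₊ with hNdef
  have hN : R ≤ ε * N := by
    have h1 : R / ε ≤ (N : ℝ) := Nat.le_ceil _
    calc R = ε * (R / ε) := by field_simp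
      _ ≤ ε * N := by nlinarith
  have hpow : ε ^ (d - n) = ε ^ (d - (n + 1)) * ε := by
    rw [← pow_succ]
    congr 1
    omega
  -- abbreviations
  set P : (Hi d n → ℤ) → ℝ :=
    fun K => ε ^ (d - n) * ∫ u : Lo d n → ℝ, f (mp ε n u K) with hPdef
  set g : (Hi d n → ℤ) → ℝ := fun K => P K + ε * T ε f ⟨n, hn⟩ K with hgdef
  -- the cell identity, in the form we need
  have hT : ∀ K : Hi d n → ℤ, T ε f ⟨n, hn⟩ K = ε ^ (d - n) *
      ∫ u : Lo d n → ℝ, ∫ t in (0:ℝ)..1, (1 - t) *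
        fderiv ℝ f (mp ε n u K + (t * ε) • (Pi.single (⟨n, hn⟩ : Fin d) 1 : Pt d))
          (Pi.single (⟨n, hn⟩ : Fin d) 1) := fun K => rfl
  have hQP : ∀ K : Hi d n → ℤ,
      ε ^ (d - (n + 1)) * (∫ u : Lo d n → ℝ,
          ∫ x in Set.Ico (ε * (K ⟨⟨n, hn⟩, le_refl n⟩ : ℤ))
            (ε * (K ⟨⟨n, hn⟩, le_refl n⟩ : ℤ) + ε),
            f (W ε n u x (fun i => K ⟨i.1, by omega⟩)))
        = g K := by
    intro K
    rw [cell_identity hε hf hn hR K]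
    simp only [hgdef, hPdef]
    rw [hT K, hpow]
    ring
  -- summability of P
  have hsumP : Summable P := by
    refine summable_box (M := N + 1) (fun K hK i => ?_)
    have h1 : (∫ u : Lo d n → ℝ, f (mp ε n u K)) ≠ 0 := by
      intro h0
      apply hK
      rw [hPdef]
      simp only [h0, mul_zero]
    have h2 : ∃ u : Lo d n → ℝ, f (mp ε n u K) ≠ 0 := by
      by_contra hc
      push_neg at hc
      apply h1
      have : (fun u : Lo d n → ℝ => f (mp ε n u K)) = fun _ => 0 := funext hc
      rw [this, integral_zero]
    obtain ⟨u, hu⟩ := h2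
    have hb := hR' _ hu i.1
    rw [mp_ge] at hb
    have hcast : |(K i : ℝ)| ≤ ((N : ℝ) + 1) := by
      rw [abs_mul, abs_of_pos hε] at hb
      have h3 : ε * |(K i : ℝ)| ≤ ε * (N + 1) := by nlinarith
      have := (mul_le_mul_iff_right₀ hε).mp h3
      linarith
    have : |(K i : ℝ)| ≤ (((N:ℤ) + 1 : ℤ) : ℝ) := by push_cast; linarith
    rw [← Int.cast_abs] at this
    exact_mod_cast this
  -- summability of T
  have hsumT : Summable (fun K : Hi d n → ℤ => T ε f ⟨n, hn⟩ K) := by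
    refine summable_box (M := N + 1) (fun K hK i => ?_)
    have h1 : (∫ u : Lo d n → ℝ, ∫ t in (0:ℝ)..1, (1 - t) *
        fderiv ℝ f (mp ε n u K + (t * ε) • (Pi.single (⟨n, hn⟩ : Fin d) 1 : Pt d))
          (Pi.single (⟨n, hn⟩ : Fin d) 1)) ≠ 0 := by
      intro h0
      apply hK
      rw [hT K, h0, mul_zero]
    have h2 : ∃ u : Lo d n → ℝ, (∫ t in (0:ℝ)..1, (1 - t) *
        fderiv ℝ f (mp ε n u K + (t * ε) • (Pi.single (⟨n, hn⟩ : Fin d) 1 : Pt d))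
          (Pi.single (⟨n, hn⟩ : Fin d) 1)) ≠ 0 := by
      by_contra hc
      push_neg at hc
      apply h1
      have : (fun u : Lo d n → ℝ => ∫ t in (0:ℝ)..1, (1 - t) *
          fderiv ℝ f (mp ε n u K + (t * ε) • (Pi.single (⟨n, hn⟩ : Fin d) 1 : Pt d))
            (Pi.single (⟨n, hn⟩ : Fin d) 1)) = fun _ => 0 := funext hc
      rw [this, integral_zero]
    obtain ⟨u, hu⟩ := h2
    have h3 : ∃ t ∈ Set.uIcc (0:ℝ) 1, (1 - t) *
        fderiv ℝ f (mp ε n u K + (t * ε) • (Pi.single (⟨n, hn⟩ : Fin d) 1 : Pt d))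
          (Pi.single (⟨n, hn⟩ : Fin d) 1) ≠ 0 := by
      by_contra hc
      push_neg at hc
      apply hu
      rw [intervalIntegral.integral_congr (g := fun _ => (0:ℝ)) (fun t ht => hc t ht)]
      simp
    obtain ⟨t, ht01, ht⟩ := h3
    rw [Set.uIcc_of_le (by norm_num : (0:ℝ) ≤ 1), Set.mem_Icc] at ht01
    have hfd : fderiv ℝ f
        (mp ε n u K + (t * ε) • (Pi.single (⟨n, hn⟩ : Fin d) 1 : Pt d)) ≠ 0 := by
      intro h0
      apply ht
      rw [h0]
      simp
    have hmem : (mp ε n u K + (t * ε) • (Pi.single (⟨n, hn⟩ : Fin d) 1 : Pt d))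
        ∈ tsupport f :=
      support_fderiv_subset ℝ (by simpa [Function.mem_support] using hfd)
    have hb := abs_le.mp (hR _ hmem i.1)
    rw [Pi.add_apply, Pi.smul_apply, mp_ge, smul_eq_mul] at hb
    have hKir : |(K i : ℝ)| ≤ (N : ℝ) + 1 := by
      by_cases hij : i.1 = (⟨n, hn⟩ : Fin d)
      · rw [hij, Pi.single_eq_same, mul_one] at hb
        rw [abs_le]
        constructor <;> nlinarith [hb.1, hb.2, ht01.1, ht01.2]
      · rw [Pi.single_eq_of_ne hij, mul_zero, add_zero] at hb
        rw [abs_le]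
        constructor <;> nlinarith [hb.1, hb.2]
    have : |(K i : ℝ)| ≤ (((N:ℤ) + 1 : ℤ) : ℝ) := by push_cast; linarith
    rw [← Int.cast_abs] at this
    exact_mod_cast this
  have hsumg : Summable g := hsumP.add (hsumT.mul_left ε)
  -- identification of the split form
  have hgQQ : ∀ (K₁ : Hi d (n+1) → ℤ) (k : ℤ),
      g ((eL n hn).symm (K₁, k)) = ε ^ (d - (n + 1)) *
        ∫ u : Lo d n → ℝ, ∫ x in Set.Ico (ε * k) (ε * k + ε), f (W ε n u x K₁) := by
    intro K₁ k
    rw [← hQP ((eL n hn).symm (K₁, k))]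
    have h1 : ((eL n hn).symm (K₁, k)) ⟨⟨n, hn⟩, le_refl n⟩ = k := eL_symm_at_n n hn K₁ k
    have h2 : (fun i : Hi d (n+1) => ((eL n hn).symm (K₁, k)) ⟨i.1, by omega⟩) = K₁ :=
      funext fun i => eL_symm_val n hn K₁ k ⟨i.1, by omega⟩ i.2
    rw [h1, h2]
  -- the main computation
  have hA1 : A ε f (n + 1) = ∑' K : Hi d n → ℤ, g K := by
    calc A ε f (n + 1)
        = ∑' K₁ : Hi d (n+1) → ℤ, ε ^ (d - (n+1)) *
            ∫ u' : Lo d (n+1) → ℝ, f (mp ε (n+1) u' K₁) := rfl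
      _ = ∑' K₁ : Hi d (n+1) → ℤ, ∑' k : ℤ, ε ^ (d - (n+1)) *
            ∫ u : Lo d n → ℝ, ∫ x in Set.Ico (ε * k) (ε * k + ε), f (W ε n u x K₁) := by
          apply tsum_congr
          intro K₁
          rw [← key_K1 hε hf.continuous hR' hn N hN K₁, tsum_mul_left]
      _ = ∑' K₁ : Hi d (n+1) → ℤ, ∑' k : ℤ, g ((eL n hn).symm (K₁, k)) := by
          apply tsum_congr; intro K₁; apply tsum_congr; intro k
          rw [hgQQ K₁ k]
      _ = ∑' p : ((Hi d (n+1) → ℤ) × ℤ), g ((eL n hn).symm p) :=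
          by
            have hs : Summable (fun p : ((Hi d (n+1) → ℤ) × ℤ) => g ((eL n hn).symm p)) :=
              ((eL n hn).symm.summable_iff).mpr hsumg
            exact (Summable.tsum_prod' hs (fun b => hs.prod_factor b)).symm
      _ = ∑' K : Hi d n → ℤ, g K := Equiv.tsum_eq (eL n hn).symm g
  have hA0 : A ε f n = ∑' K : Hi d n → ℤ, P K := rfl
  have hsplit : ∑' K : Hi d n → ℤ, g K
      = (∑' K : Hi d n → ℤ, P K) + ε * ∑' K : Hi d n → ℤ, T ε f ⟨n, hn⟩ K := by
    rw [hgdef, Summable.tsum_add hsumP (hsumT.mul_left ε)]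
    congr 1
    exact tsum_mul_left
  rw [hA1, hA0, hsplit]
  ring

lemma A_step (ε : ℝ) (hε : 0 < ε) (f : Pt d → ℝ) (hf : ContDiff ℝ 1 f)
    (hsupp : HasCompactSupport f) (j : Fin d) :
    A ε f ((j : ℕ) + 1) - A ε f (j : ℕ) = ε * ∑' K : Hi d (j : ℕ) → ℤ, T ε f j K :=
  A_step' ε hε f hf hsupp (j : ℕ) j.2

/-- Lemma 6.5, exact first-order Euler–Maclaurin formula comparing
continuum and lattice integrals. -/
theorem euler_maclaurin_first_order (d : ℕ) (hd : 1 ≤ d) (ε : ℝ) (hε : 0 < ε)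
    (f : Pt d → ℝ) (hf : ContDiff ℝ 1 f) (hsupp : HasCompactSupport f) :
    (∫ z : Pt d, f z) - ε ^ d * ∑' k : Idx d, f (toPt ε k) =
      ε * ∑ j : Fin d,
        ∑' K : ({i : Fin d // (j : ℕ) ≤ (i : ℕ)} → ℤ),
          ε ^ (d - (j : ℕ)) *
            ∫ u : ({i : Fin d // (i : ℕ) < (j : ℕ)} → ℝ),
              ∫ t in (0:ℝ)..1, (1 - t) *
                cderiv j f (mixedPt ε j u K + (t * ε) • (Pi.single j 1 : Pt d)) := by
  have key : ∀ j : Fin d,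
      A ε f ((j : ℕ) + 1) - A ε f (j : ℕ) = ε * ∑' K : Hi d (j : ℕ) → ℤ, T ε f j K :=
    A_step ε hε f hf hsupp
  have tele : ∑ j : Fin d, (A ε f ((j : ℕ) + 1) - A ε f (j : ℕ)) = A ε f d - A ε f 0 := by
    rw [Fin.sum_univ_eq_sum_range (fun j => A ε f (j + 1) - A ε f j)]
    exact Finset.sum_range_sub (fun j => A ε f j) d
  have lhs : (∫ z : Pt d, f z) - ε ^ d * ∑' k : Idx d, f (toPt ε k)
      = ∑ j : Fin d, (A ε f ((j : ℕ) + 1) - A ε f (j : ℕ)) := by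
    rw [tele, A_zero, A_top ε f]
  rw [lhs]
  rw [Finset.sum_congr rfl (fun j _ => key j), ← Finset.mul_sum]
  rfl

end FRD
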